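/- Let A ∈ ℝ^{n×n}, g ∈ ℝ^{n×l}, H ∈ ℝ^{l×n}, W¹ ∈ ℝ^{m×n}, W_min ∈ ℝ^{n×m}, b¹ ∈ ℝᵐ, c ∈ ℝⁿ, and let φ : ℝ → ℝ be incrementally sector bounded by [α, β] on ℝ with componentwise application Φ : ℝᵐ → ℝᵐ. Suppose there exist a symmetric positive definite P ∈ ℝ^{n×n} and constants 0 < p̲ ≤ p̄, γ > 0 with p̲·I ⪯ P ⪯ p̄·I such that [[(A + gH)ᵀP + P(A + gH) + γP − 2αβ·W¹ᵀW¹, P·W_min + (α+β)·W¹ᵀ], [(P·W_min + (α+β)·W¹ᵀ)ᵀ, −2·I_m]] ⪯ 0. Then any two differentiable functions x₁, x₂ : [0,∞) → ℝⁿ satisfying ẋ(t) = (A + gH)·x(t) + W_min·Φ(W¹·x(t) + b¹) + c for all t ≥ 0 satisfy ‖x₁(t) − x₂(t)‖ ≤ √(p̄/p̲)·e^{−(γ/2)·t}·‖x₁(0) − x₂(0)‖ for all t ≥ 0. -/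

import Mathlib

open Matrix

/-- The Euclidean norm of a vector in `ℝⁿ`. -/
noncomputable def eNorm {n : ℕ} (v : Fin n → ℝ) : ℝ := Real.sqrt (v ⬝ᵥ v)

lemma myHasDerivAt_dotProduct {n : ℕ} {f g : ℝ → Fin n → ℝ} {f' g' : Fin n → ℝ} {t : ℝ}
    (hf : HasDerivAt f f' t) (hg : HasDerivAt g g' t) :
    HasDerivAt (fun s => f s ⬝ᵥ g s) (f' ⬝ᵥ g t + f t ⬝ᵥ g') t := by
  have hf1 := hasDerivAt_pi.mp hf
  have hg1 := hasDerivAt_pi.mp hg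
  have h : HasDerivAt (fun s => ∑ i, f s i * g s i)
      (∑ i, (f' i * g t i + f t i * g' i)) t :=
    HasDerivAt.fun_sum (fun i _ => (hf1 i).mul (hg1 i))
  simpa [dotProduct, Finset.sum_add_distrib] using h

lemma myHasDerivAt_mulVec {k n : ℕ} (M : Matrix (Fin k) (Fin n) ℝ) {f : ℝ → Fin n → ℝ}
    {f' : Fin n → ℝ} {t : ℝ} (hf : HasDerivAt f f' t) :
    HasDerivAt (fun s => M *ᵥ (f s)) (M *ᵥ f') t := by
  rw [hasDerivAt_pi] at hf ⊢
  intro i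
  simpa [mulVec, dotProduct] using HasDerivAt.fun_sum (fun j (_ : j ∈ Finset.univ) => (hf j).const_mul (M i j))

lemma myDotSwap {k n : ℕ} (X : Matrix (Fin k) (Fin n) ℝ) (v : Fin k → ℝ) (w : Fin n → ℝ) :
    v ⬝ᵥ (X *ᵥ w) = w ⬝ᵥ (Xᵀ *ᵥ v) := by
  rw [dotProduct_mulVec, dotProduct_comm, mulVec_transpose]

/-- Lemma 2: contraction of the controlled Hopfield system
`ẋ = (A + gH) x + W_min Φ(W¹ x + b¹) + c` under the matrix inequality condition. -/
theorem controlled_hopfield_contractive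
    (n l m : ℕ) (A : Matrix (Fin n) (Fin n) ℝ)
    (g : Matrix (Fin n) (Fin l) ℝ) (H : Matrix (Fin l) (Fin n) ℝ)
    (W1 : Matrix (Fin m) (Fin n) ℝ) (Wmin : Matrix (Fin n) (Fin m) ℝ)
    (b1 : Fin m → ℝ) (c : Fin n → ℝ)
    (φ : ℝ → ℝ) (α β : ℝ)
    (hsec : ∀ a d : ℝ, (φ a - φ d - α * (a - d)) * (φ a - φ d - β * (a - d)) ≤ 0)
    (P : Matrix (Fin n) (Fin n) ℝ) (hP : P.PosDef)
    (p₁ p₂ γ : ℝ) (hp₁ : 0 < p₁) (hp₁₂ : p₁ ≤ p₂) (hγ : 0 < γ)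
    (hPlo : (P - p₁ • (1 : Matrix (Fin n) (Fin n) ℝ)).PosSemidef)
    (hPhi : (p₂ • (1 : Matrix (Fin n) (Fin n) ℝ) - P).PosSemidef)
    (hLMI : (-(Matrix.fromBlocks
        ((A + g * H)ᵀ * P + P * (A + g * H) + γ • P - (2 * α * β) • (W1ᵀ * W1))
        (P * Wmin + (α + β) • W1ᵀ)
        ((P * Wmin + (α + β) • W1ᵀ)ᵀ)
        (-(2 : ℝ) • (1 : Matrix (Fin m) (Fin m) ℝ)))).PosSemidef)
    (x₁ x₂ : ℝ → Fin n → ℝ)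
    (hx₁ : ∀ t, 0 ≤ t → HasDerivAt x₁
      ((A + g * H).mulVec (x₁ t)
        + Wmin.mulVec (fun j => φ (W1.mulVec (x₁ t) j + b1 j)) + c) t)
    (hx₂ : ∀ t, 0 ≤ t → HasDerivAt x₂
      ((A + g * H).mulVec (x₂ t)
        + Wmin.mulVec (fun j => φ (W1.mulVec (x₂ t) j + b1 j)) + c) t) :
    ∀ t, 0 ≤ t →
      eNorm (x₁ t - x₂ t) ≤
        Real.sqrt (p₂ / p₁) * Real.exp (-(γ / 2) * t) * eNorm (x₁ 0 - x₂ 0) := by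
  have hPT : Pᵀ = P := by
    have := hP.1
    rwa [Matrix.IsHermitian, conjTranspose_eq_transpose_of_trivial] at this
  set M : Matrix (Fin n) (Fin n) ℝ := A + g * H with hM
  set e : ℝ → Fin n → ℝ := fun s => x₁ s - x₂ s with he
  set Δ : ℝ → Fin m → ℝ := fun s j =>
    φ (W1.mulVec (x₁ s) j + b1 j) - φ (W1.mulVec (x₂ s) j + b1 j) with hΔ
  -- derivative of e
  have hde : ∀ s, 0 ≤ s → HasDerivAt e (M *ᵥ e s + Wmin *ᵥ Δ s) s := by
    intro s hs
    have h := (hx₁ s hs).sub (hx₂ s hs)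
    refine h.congr_deriv ?_
    have hΔeq : Δ s = (fun j => φ (W1.mulVec (x₁ s) j + b1 j))
        - (fun j => φ (W1.mulVec (x₂ s) j + b1 j)) := rfl
    rw [hΔeq]
    funext i
    simp only [he, mulVec_sub, Pi.sub_apply, Pi.add_apply]
    ring
  set V : ℝ → ℝ := fun s => e s ⬝ᵥ (P *ᵥ e s) with hV
  have hdV : ∀ s, 0 ≤ s → HasDerivAt V
      ((M *ᵥ e s + Wmin *ᵥ Δ s) ⬝ᵥ (P *ᵥ e s)
        + e s ⬝ᵥ (P *ᵥ (M *ᵥ e s + Wmin *ᵥ Δ s))) s := by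
    intro s hs
    exact myHasDerivAt_dotProduct (hde s hs) (myHasDerivAt_mulVec P (hde s hs))
  -- key pointwise inequality
  have hkey : ∀ s, 0 ≤ s →
      (M *ᵥ e s + Wmin *ᵥ Δ s) ⬝ᵥ (P *ᵥ e s)
        + e s ⬝ᵥ (P *ᵥ (M *ᵥ e s + Wmin *ᵥ Δ s)) ≤ -γ * V s := by
    intro s hs
    set v : Fin n → ℝ := e s with hv
    set w : Fin m → ℝ := Δ s with hw
    set u : Fin m → ℝ := W1 *ᵥ v with hu
    -- componentwise sector bound
    have husec : ∀ j, (w j - α * u j) * (w j - β * u j) ≤ 0 := by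
      intro j
      have hud : ((W1 *ᵥ x₁ s) j + b1 j) - ((W1 *ᵥ x₂ s) j + b1 j) = u j := by
        simp [hu, hv, he, mulVec_sub, Pi.sub_apply]
      have h1 := hsec ((W1 *ᵥ x₁ s) j + b1 j) ((W1 *ᵥ x₂ s) j + b1 j)
      rw [hud] at h1
      have hwj : w j = φ ((W1 *ᵥ x₁ s) j + b1 j) - φ ((W1 *ᵥ x₂ s) j + b1 j) := rfl
      rw [hwj]
      linarith [h1]
    have hsum : w ⬝ᵥ w - (α+β) * (u ⬝ᵥ w) + α*β*(u ⬝ᵥ u) ≤ 0 := by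
      have h1 : ∑ j, (w j - α * u j) * (w j - β * u j) ≤ 0 :=
        Finset.sum_nonpos (fun j _ => husec j)
      have h2 : w ⬝ᵥ w - (α+β) * (u ⬝ᵥ w) + α*β*(u ⬝ᵥ u)
          = ∑ j, (w j - α * u j) * (w j - β * u j) := by
        simp only [dotProduct, Finset.mul_sum, ← Finset.sum_sub_distrib,
          ← Finset.sum_add_distrib]
        exact Finset.sum_congr rfl (fun j _ => by ring)
      rw [h2]; exact h1
    -- swap identities
    have hA : v ⬝ᵥ (Mᵀ *ᵥ (P *ᵥ v)) = (M *ᵥ v) ⬝ᵥ (P *ᵥ v) := by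
      rw [myDotSwap Mᵀ v (P *ᵥ v), transpose_transpose, dotProduct_comm]
    have hB : v ⬝ᵥ (P *ᵥ (M *ᵥ v)) = (M *ᵥ v) ⬝ᵥ (P *ᵥ v) := by
      rw [myDotSwap P v (M *ᵥ v), hPT]
    have hC : v ⬝ᵥ (W1ᵀ *ᵥ (W1 *ᵥ v)) = u ⬝ᵥ u := by
      rw [myDotSwap W1ᵀ v (W1 *ᵥ v), transpose_transpose, ← hu, dotProduct_comm]
    have hD : v ⬝ᵥ (W1ᵀ *ᵥ w) = u ⬝ᵥ w := by
      rw [myDotSwap W1ᵀ v w, transpose_transpose, ← hu, dotProduct_comm]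
    have hE : w ⬝ᵥ (Wminᵀ *ᵥ (P *ᵥ v)) = v ⬝ᵥ (P *ᵥ (Wmin *ᵥ w)) := by
      rw [myDotSwap Wminᵀ w (P *ᵥ v), transpose_transpose,
        myDotSwap P v (Wmin *ᵥ w), hPT, dotProduct_comm]
    have hF : w ⬝ᵥ (W1 *ᵥ v) = u ⬝ᵥ w := by
      rw [← hu, dotProduct_comm]
    -- LMI applied to the stacked vector
    have hz := hLMI.dotProduct_mulVec_nonneg (Sum.elim v w)
    rw [star_trivial, neg_mulVec, dotProduct_neg] at hz
    rw [fromBlocks_mulVec, sumElim_dotProduct_sumElim] at hz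
    simp only [transpose_add, transpose_mul, transpose_smul, transpose_transpose, hPT,
      add_mulVec, sub_mulVec, smul_mulVec, ← mulVec_mulVec, one_mulVec, neg_smul, neg_mulVec,
      dotProduct_add, dotProduct_sub, dotProduct_smul, dotProduct_neg, smul_eq_mul,
      Sum.elim_comp_inl, Sum.elim_comp_inr] at hz
    rw [hA, hB, hC, hD, hE, hF] at hz
    -- final combination
    have hVs : V s = v ⬝ᵥ (P *ᵥ v) := rfl
    rw [hVs]
    simp only [mulVec_add, add_dotProduct, dotProduct_add]
    have hG : (Wmin *ᵥ w) ⬝ᵥ (P *ᵥ v) = v ⬝ᵥ (P *ᵥ (Wmin *ᵥ w)) := by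
      rw [myDotSwap P v (Wmin *ᵥ w), hPT]
    rw [hB, hG]
    linarith [hz, hsum]
  have hVnonneg : ∀ s, 0 ≤ V s := fun s => by
    simpa using hP.posSemidef.dotProduct_mulVec_nonneg (e s)
  -- Gronwall
  have hVle : ∀ t, 0 ≤ t → V t ≤ V 0 * Real.exp (-(γ * t)) := by
    intro t ht
    set F : ℝ → ℝ := fun s => V s * Real.exp (γ * s) with hF
    have hdF : ∀ s, 0 ≤ s → HasDerivAt F
        (((M *ᵥ e s + Wmin *ᵥ Δ s) ⬝ᵥ (P *ᵥ e s)
            + e s ⬝ᵥ (P *ᵥ (M *ᵥ e s + Wmin *ᵥ Δ s))) * Real.exp (γ * s)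
          + V s * (Real.exp (γ * s) * γ)) s := by
      intro s hs
      have h1 : HasDerivAt (fun s => Real.exp (γ * s)) (Real.exp (γ * s) * γ) s := by
        simpa using ((hasDerivAt_id s).const_mul γ).exp
      exact (hdV s hs).mul h1
    have hanti : AntitoneOn F (Set.Ici (0:ℝ)) := by
      apply antitoneOn_of_deriv_nonpos (convex_Ici 0)
      · intro s hs
        exact (hdF s hs).continuousAt.continuousWithinAt
      · intro s hs
        rw [interior_Ici] at hs
        exact (hdF s hs.le).differentiableAt.differentiableWithinAt
      · intro s hs
        rw [interior_Ici] at hs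
        rw [(hdF s hs.le).deriv]
        have h2 := hkey s hs.le
        have h3 := (Real.exp_pos (γ * s)).le
        nlinarith [mul_le_mul_of_nonneg_right h2 h3]
    have h4 : F t ≤ F 0 := hanti Set.self_mem_Ici (Set.mem_Ici.mpr ht) ht
    have h5 : V t * Real.exp (γ * t) ≤ V 0 := by
      have : F 0 = V 0 := by simp [hF]
      rw [← this]; exact h4
    calc V t = (V t * Real.exp (γ * t)) * Real.exp (-(γ * t)) := by
          rw [mul_assoc, ← Real.exp_add]; simp
      _ ≤ V 0 * Real.exp (-(γ * t)) :=
          mul_le_mul_of_nonneg_right h5 (Real.exp_pos _).le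
  -- conclusion
  intro t ht
  have hlo : p₁ * (e t ⬝ᵥ e t) ≤ V t := by
    have h0 := hPlo.dotProduct_mulVec_nonneg (e t)
    simp only [star_trivial, sub_mulVec, smul_mulVec, one_mulVec,
      dotProduct_sub, dotProduct_smul, smul_eq_mul] at h0
    linarith
  have hhi : V 0 ≤ p₂ * (e 0 ⬝ᵥ e 0) := by
    have h0 := hPhi.dotProduct_mulVec_nonneg (e 0)
    simp only [star_trivial, sub_mulVec, smul_mulVec, one_mulVec,
      dotProduct_sub, dotProduct_smul, smul_eq_mul] at h0
    linarith
  have hexp : Real.exp (-(γ * t)) = Real.exp (-(γ/2) * t) ^ 2 := by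
    rw [sq, ← Real.exp_add]; ring_nf
  have hsq : e t ⬝ᵥ e t ≤ (p₂ / p₁) * Real.exp (-(γ/2) * t) ^ 2 * (e 0 ⬝ᵥ e 0) := by
    rw [div_mul_eq_mul_div, div_mul_eq_mul_div, le_div_iff₀ hp₁]
    have h1 := hVle t ht
    rw [hexp] at h1
    have h2 : 0 ≤ Real.exp (-(γ/2) * t) ^ 2 := sq_nonneg _
    nlinarith [hVnonneg t, h2, hhi, hlo]
  have he0 : (0:ℝ) ≤ e 0 ⬝ᵥ e 0 := Finset.sum_nonneg fun i _ => mul_self_nonneg _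
  calc eNorm (x₁ t - x₂ t) = Real.sqrt (e t ⬝ᵥ e t) := rfl
    _ ≤ Real.sqrt ((p₂ / p₁) * Real.exp (-(γ/2) * t) ^ 2 * (e 0 ⬝ᵥ e 0)) :=
        Real.sqrt_le_sqrt hsq
    _ = Real.sqrt (p₂ / p₁) * Real.exp (-(γ / 2) * t) * eNorm (x₁ 0 - x₂ 0) := by
        have hq : (0:ℝ) ≤ p₂ / p₁ := div_nonneg (hp₁.le.trans hp₁₂) hp₁.le
        rw [Real.sqrt_mul (mul_nonneg hq (sq_nonneg _)), Real.sqrt_mul hq,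
          Real.sqrt_sq (Real.exp_pos _).le]
        rw [eNorm, mul_assoc]
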